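/- Let n, k be nonnegative integers with k ≤ ⌊(n+2)/2⌋. Then there are isomorphisms of posets A_k(J([n] × [2])) ≅ A_k(C(n+2, 2)) ≅ C(n+2, 2k), where A_k carries the order ≤_k. Explicitly, the map sending an antichain {(x_1,y_1),…,(x_k,y_k)} of C(n+2,2) with x_1 < ⋯ < x_k (and hence y_1 > ⋯ > y_k and x_k < y_k) to the increasing sequence (x_1,…,x_k,y_k,…,y_1) is a poset isomorphism A_k(C(n+2,2)) → C(n+2,2k). -/

import Mathlib

/-- The product poset `[a] × [b]` of the chains `{1,…,a}` and `{1,…,b}`,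
with the componentwise order. -/
abbrev Box (a b : ℕ) : Type :=
  {p : ℕ × ℕ // (1 ≤ p.1 ∧ p.1 ≤ a) ∧ (1 ≤ p.2 ∧ p.2 ≤ b)}

/-- The poset `C(n,k)`: `k`-element subsets of `{1,…,n}` written as increasing
sequences, ordered componentwise. -/
abbrev GaleC (n k : ℕ) : Type :=
  {x : Fin k → ℕ // StrictMono x ∧ ∀ i, 1 ≤ x i ∧ x i ≤ n}


/-- `A_k(P)`: the set of antichains of `P` of cardinality exactly `k`. -/
def AkSet (P : Type*) [PartialOrder P] (k : ℕ) : Type _ :=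
  {A : Finset P // IsAntichain (· ≤ ·) (A : Set P) ∧ A.card = k}

/-- The underlying finite set of elements of an antichain in `A_k(P)`. -/
def AkSet.carrier {P : Type*} [PartialOrder P] {k : ℕ} (A : AkSet P k) : Finset P :=
  Subtype.val A

/-- `A ≺_k B` iff `A \ B = {a}` and `B \ A = {b}` are singletons with `a <_P b`. -/
def PrecK {P : Type*} [PartialOrder P] {k : ℕ} (A B : AkSet P k) : Prop :=
  ∃ a b : P,
    ((A.carrier : Set P) \ (B.carrier : Set P)) = {a} ∧
    ((B.carrier : Set P) \ (A.carrier : Set P)) = {b} ∧ a < b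

/-- `≤_k`: the reflexive transitive closure of `≺_k` on `A_k(P)`. -/
def LeK {P : Type*} [PartialOrder P] {k : ℕ} : AkSet P k → AkSet P k → Prop :=
  Relation.ReflTransGen PrecK

/-- `A_k(P)` is equipped with the order `≤_k`. -/
instance {P : Type*} [PartialOrder P] {k : ℕ} : LE (AkSet P k) := ⟨LeK⟩

section Gale
variable {m k : ℕ}

lemma strictMono_fin2 {f : Fin 2 → ℕ} (h : f 0 < f 1) : StrictMono f := by
  intro a b hab
  fin_cases a <;> fin_cases b <;> simp_all <;> omega

lemma galeC_le_iff {x y : GaleC m k} : x ≤ y ↔ ∀ i, x.val i ≤ y.val i := by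
  rfl

lemma galeC_ext {x y : GaleC m k} (h : ∀ i, x.val i = y.val i) : x = y :=
  Subtype.ext (funext h)

/-- the `i`-th pair of a `2k`-sequence. -/
def pairW (z : GaleC m (2 * k)) (i : Fin k) : GaleC m 2 :=
  ⟨fun t => if (t : ℕ) = 0 then z.val ⟨i, by omega⟩
            else z.val ⟨2 * k - 1 - i, by have := i.isLt; omega⟩,
   by
    constructor
    · apply strictMono_fin2
      have : z.val ⟨i, by omega⟩ < z.val ⟨2 * k - 1 - i, by have := i.isLt; omega⟩ :=
        z.2.1 (Fin.mk_lt_mk.mpr (by have := i.isLt; omega))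
      simpa using this
    · intro t
      dsimp only
      split <;> exact z.2.2 _⟩

@[simp] lemma pairW_zero (z : GaleC m (2 * k)) (i : Fin k) :
    (pairW z i).val 0 = z.val ⟨i, by omega⟩ := rfl

@[simp] lemma pairW_one (z : GaleC m (2 * k)) (i : Fin k) :
    (pairW z i).val 1 = z.val ⟨2 * k - 1 - i, by have := i.isLt; omega⟩ := rfl

lemma pairW_injective (z : GaleC m (2 * k)) : Function.Injective (pairW z) := by
  intro i j h
  have h0 : (pairW z i).val 0 = (pairW z j).val 0 := by rw [h]
  simp only [pairW_zero] at h0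
  have := z.2.1.injective h0
  exact Fin.ext (by simpa [Fin.ext_iff] using this)

/-- the antichain associated to an increasing `2k`-sequence. -/
def dMap (z : GaleC m (2 * k)) : AkSet (GaleC m 2) k := by
  classical
  refine ⟨Finset.univ.image (pairW z), ?_, ?_⟩
  · rintro p hp q hq hne hle
    simp only [Finset.coe_image, Finset.coe_univ, Set.image_univ, Set.mem_range] at hp hq
    obtain ⟨i, rfl⟩ := hp
    obtain ⟨j, rfl⟩ := hq
    have hij : i ≠ j := fun h => hne (by rw [h])
    rcases lt_or_gt_of_ne hij with h | h
    · have h1 : (pairW z j).val 1 < (pairW z i).val 1 := by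
        simp only [pairW_one]
        exact z.2.1 (Fin.mk_lt_mk.mpr (by omega))
      exact absurd (hle 1) (not_le.mpr h1)
    · have h0 : (pairW z j).val 0 < (pairW z i).val 0 := by
        simp only [pairW_zero]
        exact z.2.1 (Fin.mk_lt_mk.mpr (by omega))
      exact absurd (hle 0) (not_le.mpr h0)
  · rw [Finset.card_image_of_injective _ (pairW_injective z), Finset.card_univ, Fintype.card_fin]

lemma dMap_carrier (z : GaleC m (2 * k)) :
    ((dMap z).carrier : Set (GaleC m 2)) = Set.range (pairW z) := by
  classical
  simp [dMap, AkSet.carrier]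

end Gale

section Gale2
variable {m k : ℕ}

lemma first_injOn (A : AkSet (GaleC m 2) k) {p q : GaleC m 2}
    (hp : p ∈ A.carrier) (hq : q ∈ A.carrier) (h : p.val 0 = q.val 0) : p = q := by
  by_contra hne
  rcases le_total (p.val 1) (q.val 1) with h1 | h1
  · exact A.2.1 (Finset.mem_coe.mpr hp) (Finset.mem_coe.mpr hq) hne
      (fun t => by fin_cases t <;> simpa [h])
  · exact A.2.1 (Finset.mem_coe.mpr hq) (Finset.mem_coe.mpr hp) (Ne.symm hne)
      (fun t => by fin_cases t <;> simp [h, h1])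

lemma enum_unique {f g : Fin k → GaleC m 2}
    (hf : StrictMono fun i => (f i).val 0) (hg : StrictMono fun i => (g i).val 0)
    (h : Set.range f = Set.range g) : f = g := by
  have hrange : Set.range (fun i => (f i).val 0) = Set.range (fun i => (g i).val 0) := by
    have h1 : Set.range (fun i => (f i).val 0) = (fun p : GaleC m 2 => p.val 0) '' Set.range f := by
      rw [← Set.range_comp]; rfl
    have h2 : Set.range (fun i => (g i).val 0) = (fun p : GaleC m 2 => p.val 0) '' Set.range g := by
      rw [← Set.range_comp]; rfl
    rw [h1, h2, h]
  haveI : WellFoundedLT (Fin k) := inferInstance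
  have hF := (StrictMono.range_inj hf hg).mp hrange
  funext i
  obtain ⟨j, hj⟩ : f i ∈ Set.range g := h ▸ Set.mem_range_self i
  have hji : (g j).val 0 = (g i).val 0 := by
    rw [hj, congrFun hF i]
  have := hg.injective hji
  rw [← hj, this]

end Gale2

section Gale3
variable {m k : ℕ}

lemma exists_enum (A : AkSet (GaleC m 2) k) :
    ∃ f : Fin k → GaleC m 2, (StrictMono fun i => (f i).val 0) ∧
      Set.range f = (A.carrier : Set (GaleC m 2)) := by
  classical
  have hSc : (A.carrier.image (fun p => p.val 0)).card = k := by
    rw [Finset.card_image_of_injOn (fun p hp q hq h => first_injOn A hp hq h)]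
    exact A.2.2
  set h := (A.carrier.image (fun p => p.val 0)).orderIsoOfFin hSc with hh
  have hex : ∀ i : Fin k, ∃! p, p ∈ A.carrier ∧ p.val 0 = (h i).val := by
    intro i
    obtain ⟨p, hp, hp0⟩ := Finset.mem_image.mp (h i).2
    exact ⟨p, ⟨hp, hp0⟩, fun q ⟨hq, hq0⟩ => first_injOn A hq hp (hq0.trans hp0.symm)⟩
  set f : Fin k → GaleC m 2 := fun i => A.carrier.choose _ (hex i) with hf
  have hfmem : ∀ i, f i ∈ A.carrier := fun i => Finset.choose_mem _ _ _
  have hf0 : ∀ i, (f i).val 0 = (h i).val := fun i => Finset.choose_property _ _ (hex i)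
  have hmono : StrictMono fun i => (f i).val 0 := by
    intro i j hij
    show (f i).val 0 < (f j).val 0
    rw [hf0, hf0]
    exact h.strictMono hij
  refine ⟨f, hmono, ?_⟩
  have hinj : Function.Injective f := fun i j hij => hmono.injective (by show (f i).val 0 = (f j).val 0; rw [hij])
  have hsub : Finset.univ.image f ⊆ A.carrier := by
    intro p hp
    rw [Finset.mem_image] at hp
    obtain ⟨i, _, rfl⟩ := hp
    exact hfmem i
  have heq : Finset.univ.image f = A.carrier := by
    apply Finset.eq_of_subset_of_card_le hsub
    rw [Finset.card_image_of_injective _ hinj, Finset.card_univ, Fintype.card_fin]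
    exact le_of_eq A.2.2
  rw [← heq]
  simp

lemma second_anti (A : AkSet (GaleC m 2) k) {f : Fin k → GaleC m 2}
    (hf : StrictMono fun i => (f i).val 0)
    (hrange : Set.range f = (A.carrier : Set (GaleC m 2)))
    {i j : Fin k} (hij : i < j) : (f j).val 1 < (f i).val 1 := by
  by_contra hle
  push_neg at hle
  have hmem : ∀ t, f t ∈ (A.carrier : Set (GaleC m 2)) := fun t => hrange ▸ Set.mem_range_self t
  have hne : f i ≠ f j := fun h =>
    absurd (congrArg (fun p : GaleC m 2 => p.val 0) h) (ne_of_lt (hf hij))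
  exact A.2.1 (hmem i) (hmem j) hne
    (fun t => by fin_cases t <;> [exact le_of_lt (hf hij); exact hle])

lemma cross_lt (A : AkSet (GaleC m 2) k) {f : Fin k → GaleC m 2}
    (hf : StrictMono fun i => (f i).val 0)
    (hrange : Set.range f = (A.carrier : Set (GaleC m 2)))
    (i j : Fin k) : (f i).val 0 < (f j).val 1 := by
  rcases le_or_gt i j with h | h
  · calc (f i).val 0 ≤ (f j).val 0 := hf.monotone h
    _ < (f j).val 1 := (f j).2.1 (by norm_num)
  · calc (f i).val 0 < (f i).val 1 := (f i).2.1 (by norm_num)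
    _ ≤ (f j).val 1 := le_of_lt (second_anti A hf hrange h)

lemma dMap_eq_of_enum (A : AkSet (GaleC m 2) k) {f : Fin k → GaleC m 2}
    (hf : StrictMono fun i => (f i).val 0)
    (hrange : Set.range f = (A.carrier : Set (GaleC m 2))) :
    ∃ z : GaleC m (2 * k), dMap z = A ∧ pairW z = f := by
  classical
  have hmono : StrictMono (fun j : Fin (2 * k) =>
      if h : (j : ℕ) < k then (f ⟨j, h⟩).val 0
      else (f ⟨2 * k - 1 - j, by have := j.isLt; omega⟩).val 1) := by
    intro a b hab
    dsimp only
    split_ifs with h1 h2 h2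
    · exact hf (Fin.mk_lt_mk.mpr (by omega))
    · exact cross_lt A hf hrange _ _
    · omega
    · exact second_anti A hf hrange (Fin.mk_lt_mk.mpr (by have := a.isLt; have := b.isLt; omega))
  have hbound : ∀ j : Fin (2 * k), 1 ≤ (if h : (j : ℕ) < k then (f ⟨j, h⟩).val 0
      else (f ⟨2 * k - 1 - j, by have := j.isLt; omega⟩).val 1) ∧
      (if h : (j : ℕ) < k then (f ⟨j, h⟩).val 0
      else (f ⟨2 * k - 1 - j, by have := j.isLt; omega⟩).val 1) ≤ m := by
    intro j
    split_ifs <;> exact ⟨((f _).2.2 _).1, ((f _).2.2 _).2⟩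
  have hpair : pairW ⟨_, hmono, hbound⟩ = f := by
    funext i
    apply galeC_ext
    intro t
    fin_cases t
    · show (if h : (i : ℕ) < k then _ else _) = (f i).val 0
      rw [dif_pos i.isLt]
    · show (if h : (2 * k - 1 - (i:ℕ)) < k then _ else _) = (f i).val 1
      rw [dif_neg (by have := i.isLt; omega)]
      exact congrArg (fun t : Fin k => (f t).val 1)
        (Fin.ext (show 2 * k - 1 - (2 * k - 1 - (i : ℕ)) = (i : ℕ) by have := i.isLt; omega))
  refine ⟨⟨_, hmono, hbound⟩, ?_, hpair⟩
  apply Subtype.ext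
  show Finset.univ.image (pairW _) = A.carrier
  rw [hpair]
  apply Finset.coe_injective
  rw [Finset.coe_image, Finset.coe_univ, Set.image_univ, hrange]
end Gale3

section Gale4
variable {m k : ℕ}

lemma pairW_first_mono (z : GaleC m (2 * k)) : StrictMono fun i => (pairW z i).val 0 := by
  intro i j hij
  simp only [pairW_zero]
  exact z.2.1 (Fin.mk_lt_mk.mpr (by omega))

lemma dMap_injective : Function.Injective (dMap (m := m) (k := k)) := by
  intro z w h
  have hr : Set.range (pairW z) = Set.range (pairW w) := by
    rw [← dMap_carrier, ← dMap_carrier, h]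
  have hp : pairW z = pairW w := enum_unique (pairW_first_mono z) (pairW_first_mono w) hr
  apply galeC_ext
  intro j
  by_cases hj : (j : ℕ) < k
  · have := congrArg (fun g => (g (⟨j, hj⟩ : Fin k)).val 0) hp
    simpa using this
  · have hj2 : (2 * k - 1 - (j : ℕ)) < k := by have := j.isLt; omega
    have := congrArg (fun g => (g (⟨2 * k - 1 - (j : ℕ), hj2⟩ : Fin k)).val 1) hp
    simp only [pairW_one] at this
    have hidx : (⟨2 * k - 1 - (2 * k - 1 - (j : ℕ)), by have := j.isLt; omega⟩ : Fin (2 * k)) = j :=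
      Fin.ext (show 2 * k - 1 - (2 * k - 1 - (j : ℕ)) = (j : ℕ) by have := j.isLt; omega)
    rwa [hidx] at this

lemma galeC_lt_le {x y : GaleC m k} (h : x < y) : ∀ i, x.val i ≤ y.val i :=
  galeC_le_iff.mp (le_of_lt h)

/-- `PrecK` step between `dMap`s forces pointwise inequality of the sequences. -/
lemma le_of_prec (z w : GaleC m (2 * k)) (h : PrecK (dMap z) (dMap w)) :
    ∀ j, z.val j ≤ w.val j := by
  classical
  obtain ⟨a, b, hA, hB, hab⟩ := h
  rw [dMap_carrier, dMap_carrier] at hA hB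
  have ha : a ∈ Set.range (pairW z) ∧ a ∉ Set.range (pairW w) := by
    have : a ∈ Set.range (pairW z) \ Set.range (pairW w) := hA ▸ rfl
    exact this
  have hb : b ∈ Set.range (pairW w) ∧ b ∉ Set.range (pairW z) := by
    have : b ∈ Set.range (pairW w) \ Set.range (pairW z) := hB ▸ rfl
    exact this
  obtain ⟨qa, hqa⟩ := ha.1
  -- for every pair of w, choose a dominating-from-below pair of z
  have hchoice : ∀ p : Fin k, ∃ q : Fin k,
      (pairW z q).val 0 ≤ (pairW w p).val 0 ∧ (pairW z q).val 1 ≤ (pairW w p).val 1 ∧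
      ((pairW w p = b ∧ pairW z q = a) ∨ pairW z q = pairW w p) := by
    intro p
    by_cases hpb : pairW w p = b
    · exact ⟨qa, by rw [hqa, hpb]; exact galeC_lt_le hab 0,
        by rw [hqa, hpb]; exact galeC_lt_le hab 1, Or.inl ⟨hpb, hqa⟩⟩
    · have hmem : pairW w p ∈ Set.range (pairW z) := by
        by_contra hc
        have : pairW w p ∈ Set.range (pairW w) \ Set.range (pairW z) :=
          ⟨Set.mem_range_self p, hc⟩
        rw [hB] at this
        exact hpb this
      obtain ⟨q, hq⟩ := hmem
      exact ⟨q, le_of_eq (by rw [hq]), le_of_eq (by rw [hq]), Or.inr hq⟩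
  set σ : Fin k → Fin k := fun p => (hchoice p).choose with hσ
  have hσ0 : ∀ p, (pairW z (σ p)).val 0 ≤ (pairW w p).val 0 := fun p => (hchoice p).choose_spec.1
  have hσ1 : ∀ p, (pairW z (σ p)).val 1 ≤ (pairW w p).val 1 := fun p => (hchoice p).choose_spec.2.1
  have hσ2 : ∀ p, (pairW w p = b ∧ pairW z (σ p) = a) ∨ pairW z (σ p) = pairW w p :=
    fun p => (hchoice p).choose_spec.2.2
  have hσinj : Function.Injective σ := by
    intro p p' hpp
    rcases hσ2 p with ⟨hb1, ha1⟩ | he1 <;> rcases hσ2 p' with ⟨hb2, ha2⟩ | he2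
    · exact pairW_injective w (hb1.trans hb2.symm)
    · exfalso
      rw [hpp, he2] at ha1
      exact ha.2 (ha1 ▸ Set.mem_range_self p')
    · exfalso
      rw [← hpp, he1] at ha2
      exact ha.2 (ha2 ▸ Set.mem_range_self p)
    · exact pairW_injective w ((he1.symm.trans (by rw [hpp, he2])))
  -- the index-level injection
  have hφ : ∀ i : Fin (2 * k), ∃ i' : Fin (2 * k), z.val i' ≤ w.val i ∧
      ((i : ℕ) < k → (i' : ℕ) < k) ∧ ((i' : ℕ) < k → (i : ℕ) < k) ∧
      (∀ j : Fin (2 * k), (z.val i' = z.val j → i' = j)) ∧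
      ((∀ h : (i : ℕ) < k, (i' : ℕ) = (σ ⟨i, h⟩ : ℕ)) ∧
       (∀ _ : ¬ (i : ℕ) < k,
          (i' : ℕ) = 2 * k - 1 - (σ ⟨2 * k - 1 - i, by have := i.isLt; omega⟩ : ℕ))) := by
    intro i
    by_cases hik : (i : ℕ) < k
    · have hσlt := (σ ⟨i, hik⟩).isLt
      refine ⟨⟨(σ ⟨i, hik⟩ : ℕ), by omega⟩, ?_, fun _ => by show (σ ⟨i, hik⟩ : ℕ) < k; omega,
        fun _ => hik, fun j hj => z.2.1.injective hj,
        fun h => by show (σ ⟨i, hik⟩ : ℕ) = (σ ⟨i, h⟩ : ℕ); rfl,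
        fun hc => absurd hik hc⟩
      have := hσ0 ⟨i, hik⟩
      simpa using this
    · have hk1 : 2 * k - 1 - (i : ℕ) < k := by have := i.isLt; omega
      have hσlt := (σ ⟨2 * k - 1 - (i : ℕ), hk1⟩).isLt
      refine ⟨⟨2 * k - 1 - (σ ⟨2 * k - 1 - (i : ℕ), hk1⟩ : ℕ), by have := i.isLt; omega⟩, ?_,
        fun hc => absurd hc hik,
        fun hc => by
          exfalso
          have : (2 * k - 1 - (σ ⟨2 * k - 1 - (i : ℕ), hk1⟩ : ℕ)) < k := hc
          omega,
        fun j hj => z.2.1.injective hj, fun hc => absurd hc hik, fun _ => rfl⟩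
      have h1 := hσ1 ⟨2 * k - 1 - (i : ℕ), hk1⟩
      simp only [pairW_one] at h1
      have hidx : (⟨2 * k - 1 - (2 * k - 1 - (i : ℕ)), by have := i.isLt; omega⟩ : Fin (2 * k)) = i :=
        Fin.ext (show 2 * k - 1 - (2 * k - 1 - (i : ℕ)) = (i : ℕ) by have := i.isLt; omega)
      rwa [hidx] at h1
  choose φ hφle hφk1 hφk2 hφinj hφval using hφ
  have hφInj : Function.Injective φ := by
    intro i i' hii
    by_cases h1 : (i : ℕ) < k <;> by_cases h2 : (i' : ℕ) < k
    · have e1 := (hφval i).1 h1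
      have e2 := (hφval i').1 h2
      rw [hii] at e1
      have : σ ⟨i, by omega⟩ = σ ⟨i', by omega⟩ := Fin.ext (e1.symm.trans e2)
      have := hσinj this
      exact Fin.ext (by simpa [Fin.ext_iff] using this)
    · exfalso
      have e1 := (hφval i).1 h1
      have e2 := (hφval i').2 h2
      rw [hii] at e1
      have hlt := (σ (⟨i.val, by omega⟩ : Fin k)).isLt
      have hlt2 := (σ (⟨2 * k - 1 - i'.val, by have := i'.isLt; omega⟩ : Fin k)).isLt
      omega
    · exfalso
      have e1 := (hφval i).2 h1
      have e2 := (hφval i').1 h2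
      rw [hii] at e1
      have hlt := (σ (⟨i'.val, by omega⟩ : Fin k)).isLt
      have hlt2 := (σ (⟨2 * k - 1 - i.val, by have := i.isLt; omega⟩ : Fin k)).isLt
      omega
    · have e1 := (hφval i).2 h1
      have e2 := (hφval i').2 h2
      rw [hii] at e1
      have hlt := (σ (⟨2 * k - 1 - i.val, by have := i.isLt; omega⟩ : Fin k)).isLt
      have hlt2 := (σ (⟨2 * k - 1 - i'.val, by have := i'.isLt; omega⟩ : Fin k)).isLt
      have : σ (⟨2 * k - 1 - i.val, by have := i.isLt; omega⟩ : Fin k)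
           = σ (⟨2 * k - 1 - i'.val, by have := i'.isLt; omega⟩ : Fin k) :=
        Fin.ext (by omega)
      have hmk : 2 * k - 1 - i.val = 2 * k - 1 - i'.val := Fin.ext_iff.mp (hσinj this)
      exact Fin.ext (by have := i.isLt; have := i'.isLt; omega)
  -- counting
  intro j
  by_contra hwj
  push_neg at hwj
  have hcard1 : (Finset.univ.filter (fun i : Fin (2 * k) => z.val i < z.val j)).card ≤ (j : ℕ) := by
    have hsub : Finset.univ.filter (fun i : Fin (2 * k) => z.val i < z.val j) ⊆ Finset.Iio j := by
      intro i hi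
      rw [Finset.mem_filter] at hi
      rw [Finset.mem_Iio]
      exact z.2.1.lt_iff_lt.mp hi.2
    calc _ ≤ (Finset.Iio j).card := Finset.card_le_card hsub
    _ = (j : ℕ) := Fin.card_Iio j
  have hcard2 : (j : ℕ) + 1 ≤ (Finset.univ.filter (fun i : Fin (2 * k) => w.val i < z.val j)).card := by
    have hsub : Finset.Iic j ⊆ Finset.univ.filter (fun i : Fin (2 * k) => w.val i < z.val j) := by
      intro i hi
      rw [Finset.mem_Iic] at hi
      rw [Finset.mem_filter]
      exact ⟨Finset.mem_univ _, lt_of_le_of_lt (w.2.1.monotone hi) hwj⟩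
    calc (j : ℕ) + 1 = (Finset.Iic j).card := (Fin.card_Iic j).symm
    _ ≤ _ := Finset.card_le_card hsub
  have hcard3 : (Finset.univ.filter (fun i : Fin (2 * k) => w.val i < z.val j)).card ≤
      (Finset.univ.filter (fun i : Fin (2 * k) => z.val i < z.val j)).card := by
    apply Finset.card_le_card_of_injOn φ
    · intro i hi
      rw [Finset.mem_coe, Finset.mem_filter] at hi ⊢
      exact ⟨Finset.mem_univ _, lt_of_le_of_lt (hφle i) hi.2⟩
    · exact fun i _ i' _ h => hφInj h
  omega

end Gale4

section Gale5
variable {m k : ℕ}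

def posA (i : Fin k) : Fin (2 * k) := ⟨i, by have := i.isLt; omega⟩
def posB (i : Fin k) : Fin (2 * k) := ⟨2 * k - 1 - i, by have := i.isLt; omega⟩

lemma pairW_zero' (z : GaleC m (2 * k)) (i : Fin k) : (pairW z i).val 0 = z.val (posA i) := rfl
lemma pairW_one' (z : GaleC m (2 * k)) (i : Fin k) : (pairW z i).val 1 = z.val (posB i) := rfl

lemma posA_val (i : Fin k) : ((posA i : Fin (2 * k)) : ℕ) = i := rfl
lemma posB_val (i : Fin k) : ((posB i : Fin (2 * k)) : ℕ) = 2 * k - 1 - i := rfl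

lemma exists_pos_idx (j₀ : Fin (2 * k)) :
    ∃ i₀ : Fin k, (j₀ = posA i₀ ∨ j₀ = posB i₀) ∧
      ∀ i : Fin k, i ≠ i₀ → posA i ≠ j₀ ∧ posB i ≠ j₀ := by
  have hj := j₀.isLt
  by_cases h : (j₀ : ℕ) < k
  · refine ⟨⟨j₀, h⟩, Or.inl (Fin.ext rfl), fun i hi => ⟨?_, ?_⟩⟩
    · intro hc
      apply hi
      apply Fin.ext
      have := Fin.ext_iff.mp hc
      rw [posA_val] at this
      simpa using this
    · intro hc
      have := Fin.ext_iff.mp hc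
      rw [posB_val] at this
      have := i.isLt
      omega
  · refine ⟨⟨2 * k - 1 - j₀, by omega⟩, Or.inr (by
      apply Fin.ext
      rw [posB_val]
      show (j₀ : ℕ) = 2 * k - 1 - (2 * k - 1 - (j₀ : ℕ))
      omega), fun i hi => ⟨?_, ?_⟩⟩
    · intro hc
      have := Fin.ext_iff.mp hc
      rw [posA_val] at this
      have := i.isLt
      omega
    · intro hc
      apply hi
      apply Fin.ext
      have := Fin.ext_iff.mp hc
      rw [posB_val] at this
      show (i : ℕ) = 2 * k - 1 - (j₀ : ℕ)
      have := i.isLt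
      omega

lemma prec_of_update (z z' : GaleC m (2 * k)) (j₀ : Fin (2 * k))
    (hlt : z.val j₀ < z'.val j₀) (hother : ∀ j, j ≠ j₀ → z.val j = z'.val j) :
    PrecK (dMap z) (dMap z') := by
  obtain ⟨i₀, hpos, hoth⟩ := exists_pos_idx j₀
  have hsame : ∀ i : Fin k, i ≠ i₀ → pairW z i = pairW z' i := by
    intro i hi
    apply galeC_ext
    intro t
    fin_cases t
    · show (pairW z i).val 0 = (pairW z' i).val 0
      rw [pairW_zero', pairW_zero']
      exact hother _ (hoth i hi).1
    · show (pairW z i).val 1 = (pairW z' i).val 1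
      rw [pairW_one', pairW_one']
      exact hother _ (hoth i hi).2
  have hne : pairW z i₀ ≠ pairW z' i₀ := by
    intro hc
    rcases hpos with h | h
    · have := congrArg (fun p : GaleC m 2 => p.val 0) hc
      simp only [pairW_zero'] at this
      rw [← h] at this
      omega
    · have := congrArg (fun p : GaleC m 2 => p.val 1) hc
      simp only [pairW_one'] at this
      rw [← h] at this
      omega
  have hle : pairW z i₀ ≤ pairW z' i₀ := by
    intro t
    fin_cases t
    · show (pairW z i₀).val 0 ≤ (pairW z' i₀).val 0
      rw [pairW_zero', pairW_zero']
      rcases eq_or_ne (posA i₀) j₀ with h | h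
      · rw [h]; omega
      · rw [hother _ h]
    · show (pairW z i₀).val 1 ≤ (pairW z' i₀).val 1
      rw [pairW_one', pairW_one']
      rcases eq_or_ne (posB i₀) j₀ with h | h
      · rw [h]; omega
      · rw [hother _ h]
  refine ⟨pairW z i₀, pairW z' i₀, ?_, ?_, lt_of_le_of_ne hle hne⟩
  · rw [dMap_carrier, dMap_carrier]
    ext x
    simp only [Set.mem_diff, Set.mem_range, Set.mem_singleton_iff]
    constructor
    · rintro ⟨⟨i, rfl⟩, hnx⟩
      rcases eq_or_ne i i₀ with rfl | hi
      · rfl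
      · exact absurd ⟨i, (hsame i hi).symm⟩ hnx
    · rintro rfl
      refine ⟨⟨i₀, rfl⟩, ?_⟩
      rintro ⟨i, hi⟩
      rcases eq_or_ne i i₀ with rfl | hi2
      · exact hne hi.symm
      · rw [← hsame i hi2] at hi
        exact hi2 (pairW_injective z hi)
  · rw [dMap_carrier, dMap_carrier]
    ext x
    simp only [Set.mem_diff, Set.mem_range, Set.mem_singleton_iff]
    constructor
    · rintro ⟨⟨i, rfl⟩, hnx⟩
      rcases eq_or_ne i i₀ with rfl | hi
      · rfl
      · exact absurd ⟨i, hsame i hi⟩ hnx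
    · rintro rfl
      refine ⟨⟨i₀, rfl⟩, ?_⟩
      rintro ⟨i, hi⟩
      rcases eq_or_ne i i₀ with rfl | hi2
      · exact hne hi
      · rw [hsame i hi2] at hi
        exact hi2 (pairW_injective z' hi)
end Gale5

section Gale6
variable {m k : ℕ}

lemma dMap_surjective : Function.Surjective (dMap (m := m) (k := k)) := by
  intro A
  obtain ⟨f, hf, hr⟩ := exists_enum A
  obtain ⟨z, hz, _⟩ := dMap_eq_of_enum A hf hr
  exact ⟨z, hz⟩

lemma le_step_chain : ∀ (N : ℕ) (z w : GaleC m (2 * k)),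
    (∑ j, (w.val j - z.val j)) ≤ N → (∀ j, z.val j ≤ w.val j) → LeK (dMap z) (dMap w) := by
  intro N
  induction N with
  | zero =>
    intro z w hsum h
    have hzw : z = w := by
      apply galeC_ext
      intro j
      have h1 := Finset.sum_eq_zero_iff.mp (Nat.le_zero.mp hsum) j (Finset.mem_univ j)
      have h2 := h j
      omega
    rw [hzw]
    exact Relation.ReflTransGen.refl
  | succ N ih =>
    intro z w hsum h
    by_cases hzw : z = w
    · rw [hzw]; exact Relation.ReflTransGen.refl
    · have hne : ∃ j, z.val j < w.val j := by
        by_contra hc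
        push_neg at hc
        exact hzw (galeC_ext fun j => le_antisymm (h j) (hc j))
      obtain ⟨j1, hj1⟩ := hne
      set D := Finset.univ.filter (fun j : Fin (2 * k) => z.val j < w.val j) with hD
      have hDne : D.Nonempty := ⟨j1, by simp [hD, hj1]⟩
      set j₀ := D.max' hDne with hj₀
      have hj₀mem : z.val j₀ < w.val j₀ :=
        (Finset.mem_filter.mp (D.max'_mem hDne)).2
      have hmax : ∀ j, j₀ < j → z.val j = w.val j := by
        intro j hj
        by_contra hc
        have hjD : j ∈ D := Finset.mem_filter.mpr ⟨Finset.mem_univ _, lt_of_le_of_ne (h j) hc⟩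
        exact absurd (D.le_max' j hjD) (not_le.mpr hj)
      have hmono : StrictMono (Function.update z.val j₀ (w.val j₀)) := by
        intro a b hab
        rcases eq_or_ne a j₀ with rfl | ha <;> rcases eq_or_ne b j₀ with rfl | hb
        · exact absurd hab (lt_irrefl _)
        · rw [Function.update_self, Function.update_of_ne hb, hmax b hab]
          exact w.2.1 hab
        · rw [Function.update_self, Function.update_of_ne ha]
          exact lt_trans (z.2.1 hab) hj₀mem
        · rw [Function.update_of_ne ha, Function.update_of_ne hb]
          exact z.2.1 hab
      have hbound : ∀ j, 1 ≤ Function.update z.val j₀ (w.val j₀) j ∧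
          Function.update z.val j₀ (w.val j₀) j ≤ m := by
        intro j
        rcases eq_or_ne j j₀ with rfl | hj
        · rw [Function.update_self]; exact w.2.2 _
        · rw [Function.update_of_ne hj]; exact z.2.2 _
      set z' : GaleC m (2 * k) := ⟨Function.update z.val j₀ (w.val j₀), hmono, hbound⟩ with hz'
      have hz'j₀ : z'.val j₀ = w.val j₀ := Function.update_self _ _ _
      have hz'other : ∀ j, j ≠ j₀ → z'.val j = z.val j := fun j hj => Function.update_of_ne hj _ _
      have hstep : PrecK (dMap z) (dMap z') :=
        prec_of_update z z' j₀ (by rw [hz'j₀]; exact hj₀mem)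
          (fun j hj => (hz'other j hj).symm)
      have hle' : ∀ j, z'.val j ≤ w.val j := by
        intro j
        rcases eq_or_ne j j₀ with rfl | hj
        · rw [hz'j₀]
        · rw [hz'other j hj]; exact h j
      have hsum' : (∑ j, (w.val j - z'.val j)) ≤ N := by
        have hlt : (∑ j, (w.val j - z'.val j)) < ∑ j, (w.val j - z.val j) := by
          apply Finset.sum_lt_sum
          · intro i _
            rcases eq_or_ne i j₀ with rfl | hi
            · rw [hz'j₀]; omega
            · rw [hz'other i hi]
          · exact ⟨j₀, Finset.mem_univ _, by rw [hz'j₀]; omega⟩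
        omega
      exact Relation.ReflTransGen.head hstep (ih z' w hsum' hle')

lemma leK_le {z : GaleC m (2 * k)} :
    ∀ {B}, Relation.ReflTransGen PrecK (dMap z) B → ∀ w, dMap w = B → z ≤ w := by
  intro B h
  induction h with
  | refl =>
    intro w hw
    rw [dMap_injective hw]
  | tail _ hstep ih =>
    intro w hw
    rename_i B' B hRB'
    obtain ⟨f, hf, hr⟩ := exists_enum B'
    obtain ⟨w', hw', _⟩ := dMap_eq_of_enum B' hf hr
    have h1 : z ≤ w' := ih w' hw'
    have h2 : ∀ j, w'.val j ≤ w.val j := le_of_prec w' w (by rw [hw', hw]; exact hstep)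
    exact le_trans h1 (fun j => h2 j)

lemma leK_iff (z w : GaleC m (2 * k)) : LeK (dMap z) (dMap w) ↔ z ≤ w := by
  constructor
  · intro hle
    exact leK_le hle w rfl
  · intro hle
    exact le_step_chain (∑ j, (w.val j - z.val j)) z w (le_refl _) (fun j => hle j)

noncomputable def galeIso : AkSet (GaleC m 2) k ≃o GaleC m (2 * k) :=
  OrderIso.symm
    { toEquiv := Equiv.ofBijective dMap ⟨dMap_injective, dMap_surjective⟩
      map_rel_iff' := by
        intro z w
        exact leK_iff z w }

lemma galeIso_apply (A : AkSet (GaleC m 2) k) (f : Fin k → GaleC m 2)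
    (hf : StrictMono fun i => (f i).val 0)
    (hr : Set.range f = (A.carrier : Set (GaleC m 2))) (j : Fin (2 * k)) :
    (galeIso A).val j =
      if h : (j : ℕ) < k then (f ⟨j, h⟩).val 0
      else (f ⟨2 * k - 1 - j, by have := j.isLt; omega⟩).val 1 := by
  obtain ⟨z, hz, hpair⟩ := dMap_eq_of_enum A hf hr
  have hAz : galeIso A = z := by
    apply dMap_injective
    show dMap ((galeIso (m := m) (k := k)).toEquiv A) = dMap z
    rw [hz]
    exact (Equiv.ofBijective dMap ⟨dMap_injective, dMap_surjective⟩).apply_symm_apply A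
  rw [hAz]
  split_ifs with h
  · have hjA : j = posA ⟨(j : ℕ), h⟩ := Fin.ext rfl
    conv_lhs => rw [hjA, ← pairW_zero', hpair]
  · have hjB : j = posB ⟨2 * k - 1 - (j : ℕ), by have := j.isLt; omega⟩ := by
      apply Fin.ext
      rw [posB_val]
      show (j : ℕ) = 2 * k - 1 - (2 * k - 1 - (j : ℕ))
      have := j.isLt; omega
    conv_lhs => rw [hjB, ← pairW_one', hpair]
end Gale6

section Congr
variable {P Q : Type*} [PartialOrder P] [PartialOrder Q] {k : ℕ}

def akMap (e : P ≃o Q) (A : AkSet P k) : AkSet Q k :=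
  ⟨A.carrier.map ⟨e, e.injective⟩, by
    rintro x hx y hy hne hle
    simp only [Finset.coe_map, Set.mem_image, Function.Embedding.coeFn_mk] at hx hy
    obtain ⟨a, ha, rfl⟩ := hx
    obtain ⟨b, hb, rfl⟩ := hy
    exact A.2.1 ha hb (fun h => hne (congrArg e h)) (e.le_iff_le.mp hle), by
    rw [Finset.card_map]
    exact A.2.2⟩

lemma akMap_carrier (e : P ≃o Q) (A : AkSet P k) :
    ((akMap e A).carrier : Set Q) = e '' (A.carrier : Set P) := by
  simp [akMap, AkSet.carrier]

lemma akMap_prec (e : P ≃o Q) {A B : AkSet P k} (h : PrecK A B) :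
    PrecK (akMap e A) (akMap e B) := by
  obtain ⟨a, b, hA, hB, hab⟩ := h
  refine ⟨e a, e b, ?_, ?_, e.strictMono hab⟩
  · rw [akMap_carrier, akMap_carrier, ← Set.image_diff e.injective, hA, Set.image_singleton]
  · rw [akMap_carrier, akMap_carrier, ← Set.image_diff e.injective, hB, Set.image_singleton]

lemma akMap_symm (e : P ≃o Q) (A : AkSet P k) : akMap e.symm (akMap e A) = A := by
  apply Subtype.ext
  show ((akMap e A).carrier.map _) = A.carrier
  show ((A.carrier.map ⟨e, e.injective⟩).map ⟨e.symm, e.symm.injective⟩) = A.carrier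
  rw [Finset.map_map]
  ext p
  simp only [Finset.mem_map, Function.Embedding.trans_apply, Function.Embedding.coeFn_mk]
  constructor
  · rintro ⟨q, hq, rfl⟩
    simpa using hq
  · intro hp
    exact ⟨p, hp, e.symm_apply_apply p⟩

def akCongr (e : P ≃o Q) : AkSet P k ≃o AkSet Q k where
  toFun := akMap e
  invFun := akMap e.symm
  left_inv A := akMap_symm e A
  right_inv A := by
    have := akMap_symm e.symm A
    rwa [OrderIso.symm_symm] at this
  map_rel_iff' := by
    intro A B
    show LeK (akMap e A) (akMap e B) ↔ LeK A B
    constructor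
    · intro h
      have : LeK (akMap e.symm (akMap e A)) (akMap e.symm (akMap e B)) :=
        Relation.ReflTransGen.lift (akMap e.symm) (fun _ _ hp => akMap_prec e.symm hp) _ _ h
      rwa [akMap_symm, akMap_symm] at this
    · intro h
      exact Relation.ReflTransGen.lift (akMap e) (fun _ _ hp => akMap_prec e hp) _ _ h
end Congr

section Box
variable {n : ℕ}

lemma box_le_iff {p q : Box n 2} : p ≤ q ↔ p.val.1 ≤ q.val.1 ∧ p.val.2 ≤ q.val.2 := by
  rfl

/-- The lower set of `[n] × [2]` associated to an element of `C(n+2,2)`. -/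
def toLower (x : GaleC (n + 2) 2) : LowerSet (Box n 2) :=
  ⟨{p | (p.val.2 = 1 ∧ p.val.1 + 2 ≤ x.val 1) ∨ (p.val.2 = 2 ∧ p.val.1 + 1 ≤ x.val 0)}, by
    intro q p hpq hq
    have h01 : x.val 0 < x.val 1 := x.2.1 (by norm_num)
    have hpq' := box_le_iff.mp hpq
    have hp2 := p.2.2
    rcases hq with ⟨hq2, hqle⟩ | ⟨hq2, hqle⟩
    · left
      constructor
      · omega
      · omega
    · rcases Nat.lt_or_ge p.val.2 2 with h | h
      · left
        constructor
        · omega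
        · omega
      · right
        constructor
        · omega
        · omega⟩

lemma mem_toLower {x : GaleC (n + 2) 2} {p : Box n 2} :
    p ∈ toLower x ↔ (p.val.2 = 1 ∧ p.val.1 + 2 ≤ x.val 1) ∨ (p.val.2 = 2 ∧ p.val.1 + 1 ≤ x.val 0) :=
  Iff.rfl

lemma mem_toLower' {x : GaleC (n + 2) 2} {p : Box n 2} :
    p ∈ (toLower x : Set (Box n 2)) ↔
      (p.val.2 = 1 ∧ p.val.1 + 2 ≤ x.val 1) ∨ (p.val.2 = 2 ∧ p.val.1 + 1 ≤ x.val 0) :=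
  Iff.rfl

lemma toLower_mono {x y : GaleC (n + 2) 2} (h : x ≤ y) : toLower x ≤ toLower y := by
  intro p hp
  rw [mem_toLower'] at hp ⊢
  have h0 : x.val 0 ≤ y.val 0 := h 0
  have h1 : x.val 1 ≤ y.val 1 := h 1
  rcases hp with ⟨h2, h3⟩ | ⟨h2, h3⟩
  · exact Or.inl ⟨h2, by omega⟩
  · exact Or.inr ⟨h2, by omega⟩

lemma toLower_reflect {x y : GaleC (n + 2) 2} (h : toLower x ≤ toLower y) : x ≤ y := by
  have hx01 : x.val 0 < x.val 1 := x.2.1 (by norm_num)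
  have hy01 : y.val 0 < y.val 1 := y.2.1 (by norm_num)
  have hx0 := x.2.2 0
  have hx1 := x.2.2 1
  have hy0 := y.2.2 0
  have hy1 := y.2.2 1
  have h0 : x.val 0 ≤ y.val 0 := by
    rcases Nat.lt_or_ge (x.val 0) 2 with hc | hc
    · omega
    · have hp : (⟨(x.val 0 - 1, 2), by constructor <;> constructor <;> omega⟩ : Box n 2) ∈
          toLower x := by
        rw [mem_toLower]
        right
        constructor
        · rfl
        · show x.val 0 - 1 + 1 ≤ x.val 0; omega
      have := h hp
      rw [mem_toLower'] at this
      rcases this with ⟨h2, _⟩ | ⟨_, h3⟩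
      · exact absurd h2 (by norm_num)
      · have h3' : x.val 0 - 1 + 1 ≤ y.val 0 := h3
        omega
  have h1 : x.val 1 ≤ y.val 1 := by
    rcases Nat.lt_or_ge (x.val 1) 3 with hc | hc
    · omega
    · have hp : (⟨(x.val 1 - 2, 1), by constructor <;> constructor <;> omega⟩ : Box n 2) ∈
          toLower x := by
        rw [mem_toLower]
        left
        constructor
        · rfl
        · show x.val 1 - 2 + 2 ≤ x.val 1; omega
      have := h hp
      rw [mem_toLower'] at this
      rcases this with ⟨_, h3⟩ | ⟨h2, _⟩
      · have h3' : x.val 1 - 2 + 2 ≤ y.val 1 := h3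
        omega
      · exact absurd h2 (by norm_num)
  intro t
  fin_cases t
  · exact h0
  · exact h1

lemma toLower_surjective : Function.Surjective (toLower (n := n)) := by
  intro L
  classical
  set A1 : Set ℕ := {j | ∃ hb : (1 ≤ (j, 1).1 ∧ (j, 1).1 ≤ n) ∧ (1 ≤ (j, 1).2 ∧ (j, 1).2 ≤ 2),
    (⟨(j, 1), hb⟩ : Box n 2) ∈ L} with hA1
  set A2 : Set ℕ := {j | ∃ hb : (1 ≤ (j, 2).1 ∧ (j, 2).1 ≤ n) ∧ (1 ≤ (j, 2).2 ∧ (j, 2).2 ≤ 2),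
    (⟨(j, 2), hb⟩ : Box n 2) ∈ L} with hA2
  have hA1bdd : BddAbove A1 := ⟨n, fun j hj => hj.choose.1.2⟩
  have hA2bdd : BddAbove A2 := ⟨n, fun j hj => hj.choose.1.2⟩
  have hsub : A2 ⊆ A1 := by
    rintro j ⟨hb, hmem⟩
    refine ⟨⟨hb.1, by norm_num⟩, ?_⟩
    have hle : (⟨(j, 1), ⟨hb.1, by norm_num⟩⟩ : Box n 2) ≤ ⟨(j, 2), hb⟩ :=
      box_le_iff.mpr ⟨le_refl _, by norm_num⟩
    exact L.lower' hle hmem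
  set a := sSup A1 with ha
  set b := sSup A2 with hbdef
  have hA1mem : A1.Nonempty → a ∈ A1 := fun hne => Nat.sSup_mem hne hA1bdd
  have hA2mem : A2.Nonempty → b ∈ A2 := fun hne => Nat.sSup_mem hne hA2bdd
  have han : a ≤ n := by
    rcases Set.eq_empty_or_nonempty A1 with he | hne
    · rw [ha, he, csSup_empty]; exact Nat.zero_le n
    · exact (hA1mem hne).choose.1.2
  have hba : b ≤ a := by
    rcases Set.eq_empty_or_nonempty A2 with he | hne
    · rw [hbdef, he, csSup_empty]; exact Nat.zero_le a
    · exact le_csSup hA1bdd (hsub (hA2mem hne))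
  refine ⟨⟨fun t => if (t : ℕ) = 0 then b + 1 else a + 2, ?_, ?_⟩, ?_⟩
  · apply strictMono_fin2
    simp only [Fin.val_zero, Fin.val_one]
    norm_num
    omega
  · intro t
    fin_cases t <;> simp <;> omega
  · apply SetLike.ext
    intro p
    rw [mem_toLower]
    have hp2 := p.2.2
    have hp1 := p.2.1
    show ((p.val.2 = 1 ∧ p.val.1 + 2 ≤ a + 2) ∨ (p.val.2 = 2 ∧ p.val.1 + 1 ≤ b + 1)) ↔ p ∈ L
    constructor
    · rintro (⟨h2, h3⟩ | ⟨h2, h3⟩)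
      · have h3' : p.val.1 ≤ a := by omega
        have hane : A1.Nonempty := by
          rcases Set.eq_empty_or_nonempty A1 with he | hne
          · exfalso
            rw [ha, he, csSup_empty] at h3'
            simp at h3'
            omega
          · exact hne
        obtain ⟨hba', hmem⟩ := hA1mem hane
        have hpe : p = ⟨(p.val.1, 1), ⟨hp1, by norm_num⟩⟩ :=
          Subtype.ext (Prod.ext rfl h2)
        rw [hpe]
        have hle : (⟨(p.val.1, 1), ⟨hp1, by norm_num⟩⟩ : Box n 2) ≤ ⟨(a, 1), hba'⟩ :=
          box_le_iff.mpr ⟨h3', le_refl _⟩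
        exact L.lower' hle hmem
      · have h3' : p.val.1 ≤ b := by omega
        have hane : A2.Nonempty := by
          rcases Set.eq_empty_or_nonempty A2 with he | hne
          · exfalso
            rw [hbdef, he, csSup_empty] at h3'
            simp at h3'
            omega
          · exact hne
        obtain ⟨hba', hmem⟩ := hA2mem hane
        have hpe : p = ⟨(p.val.1, 2), ⟨hp1, by norm_num⟩⟩ :=
          Subtype.ext (Prod.ext rfl h2)
        rw [hpe]
        have hle : (⟨(p.val.1, 2), ⟨hp1, by norm_num⟩⟩ : Box n 2) ≤ ⟨(b, 2), hba'⟩ :=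
          box_le_iff.mpr ⟨h3', le_refl _⟩
        exact L.lower' hle hmem
    · intro hmem
      have h2 : p.val.2 = 1 ∨ p.val.2 = 2 := by omega
      rcases h2 with h2 | h2
      · left
        refine ⟨h2, ?_⟩
        have hj : p.val.1 ∈ A1 := by
          refine ⟨⟨hp1, by norm_num⟩, ?_⟩
          have hpe : p = ⟨(p.val.1, 1), ⟨hp1, by norm_num⟩⟩ :=
            Subtype.ext (Prod.ext rfl h2)
          rwa [hpe] at hmem
        have := le_csSup hA1bdd hj
        omega
      · right
        refine ⟨h2, ?_⟩
        have hj : p.val.1 ∈ A2 := by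
          refine ⟨⟨hp1, by norm_num⟩, ?_⟩
          have hpe : p = ⟨(p.val.1, 2), ⟨hp1, by norm_num⟩⟩ :=
            Subtype.ext (Prod.ext rfl h2)
          rwa [hpe] at hmem
        have := le_csSup hA2bdd hj
        omega
end Box

noncomputable def boxIso (n : ℕ) : GaleC (n + 2) 2 ≃o LowerSet (Box n 2) where
  toEquiv := Equiv.ofBijective toLower
    ⟨fun x y hxy => le_antisymm (toLower_reflect (le_of_eq hxy)) (toLower_reflect (ge_of_eq hxy)),
     toLower_surjective⟩
  map_rel_iff' := ⟨toLower_reflect, toLower_mono⟩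


/-- For `k ≤ ⌊(n+2)/2⌋` there are poset isomorphisms
`A_k(J([n] × [2])) ≅ A_k(C(n+2,2)) ≅ C(n+2, 2k)` (where `J([n] × [2])` is the poset
of order ideals, i.e. lower sets, of `[n] × [2]`).  Explicitly, the second
isomorphism sends the antichain `{(x₁,y₁),…,(x_k,y_k)}` of `C(n+2,2)` with
`x₁ < ⋯ < x_k` (hence `y₁ > ⋯ > y_k` and `x_k < y_k`) to the increasing sequence
`(x₁,…,x_k,y_k,…,y_1)`. -/
theorem stmt16 (n k : ℕ) (hk : k ≤ (n + 2) / 2) :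
    Nonempty (AkSet (LowerSet (Box n 2)) k ≃o AkSet (GaleC (n + 2) 2) k) ∧
    ∃ e : AkSet (GaleC (n + 2) 2) k ≃o GaleC (n + 2) (2 * k),
      ∀ (A : AkSet (GaleC (n + 2) 2) k) (f : Fin k → GaleC (n + 2) 2),
        (StrictMono fun i => (f i).val 0) →
        Set.range f = (A.carrier : Set (GaleC (n + 2) 2)) →
        ∀ j : Fin (2 * k),
          (e A).val j =
            if h : (j : ℕ) < k then (f ⟨j, h⟩).val 0
            else (f ⟨2 * k - 1 - j, by have := j.isLt; omega⟩).val 1 := by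
  constructor
  · exact ⟨akCongr (boxIso n).symm⟩
  · exact ⟨galeIso, fun A f hf hr j => galeIso_apply A f hf hr j⟩
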